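/- Fix l > 0 and let y_m be the minimum vectors for G₂. Then for every f₀ ∈ ℤ² and every integer k ≥ 3, there exist integers a, b ∈ ℤ such that G₂ f₀ / l = a·y_{k−1} + b·y_{k−2}. In particular, for k = 3 one may take G₂ f₀ / l = (−3 f_{0,1} + f_{0,2})·y₁ − f_{0,1}·y₂, where f₀ = (f_{0,1}, f_{0,2}). -/

import Mathlib

open Matrix

/-- The generator matrix `G₂` of the 15-degree rotated hexagonal lattice. -/
noncomputable def G₂ : Matrix (Fin 2) (Fin 2) ℝ :=
  !![(Real.sqrt 3 - 1) / (2 * Real.sqrt 2), -(Real.sqrt 3 + 1) / (2 * Real.sqrt 2);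
     -(Real.sqrt 3 + 1) / (2 * Real.sqrt 2), (Real.sqrt 3 - 1) / (2 * Real.sqrt 2)]

/-- The minimum vectors `y_m` for `G₂`. -/
noncomputable def yvec (l : ℝ) (m : ℕ) : ℝ × ℝ :=
  if m % 2 = 1 then
    (-((Real.sqrt 3 + 1) ^ m) / ((2 : ℝ) ^ ((m - 1) / 2) * 2 * Real.sqrt 2) / l,
      ((Real.sqrt 3 - 1) ^ m) / ((2 : ℝ) ^ ((m - 1) / 2) * 2 * Real.sqrt 2) / l)
  else
    (((Real.sqrt 3 + 1) ^ m) / ((2 : ℝ) ^ (m / 2 - 1) * 2 * Real.sqrt 2) / l,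
      ((Real.sqrt 3 - 1) ^ m) / ((2 : ℝ) ^ (m / 2 - 1) * 2 * Real.sqrt 2) / l)

lemma yrec (l : ℝ) (m : ℕ) (hm : 1 ≤ m) :
    (yvec l m).1 = (yvec l (m+2)).1
      + ((if m % 2 = 1 then 1 else 2 : ℤ) : ℝ) * (yvec l (m+1)).1 ∧
    (yvec l m).2 = (yvec l (m+2)).2
      + ((if m % 2 = 1 then 1 else 2 : ℤ) : ℝ) * (yvec l (m+1)).2 := by
  have h3 : Real.sqrt 3 ^ 2 = 3 := Real.sq_sqrt (by norm_num)
  have h2 : Real.sqrt 2 ≠ 0 := ne_of_gt (Real.sqrt_pos.mpr (by norm_num))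
  rcases Nat.even_or_odd m with he | ho
  · obtain ⟨j, hj⟩ := he
    have hj1 : 1 ≤ j := by omega
    subst hj
    have e1 : (j + j) % 2 = 0 := by omega
    have e2 : (j + j + 2) % 2 = 0 := by omega
    have e3 : (j + j + 1) % 2 = 1 := by omega
    have d1 : (j + j) / 2 - 1 = j - 1 := by omega
    have d2 : (j + j + 2) / 2 - 1 = j := by omega
    have d3 : (j + j + 1 - 1) / 2 = j := by omega
    simp only [yvec, e1, e2, e3, d1, d2, d3, if_true, if_false]
    norm_num
    have hp1 : (Real.sqrt 3 + 1) ^ (j + j + 2) = (Real.sqrt 3 + 1) ^ (j+j) * (Real.sqrt 3 + 1)^2 := by ring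
    have hp2 : (Real.sqrt 3 + 1) ^ (j + j + 1) = (Real.sqrt 3 + 1) ^ (j+j) * (Real.sqrt 3 + 1) := by ring
    have hq1 : (Real.sqrt 3 - 1) ^ (j + j + 2) = (Real.sqrt 3 - 1) ^ (j+j) * (Real.sqrt 3 - 1)^2 := by ring
    have hq2 : (Real.sqrt 3 - 1) ^ (j + j + 1) = (Real.sqrt 3 - 1) ^ (j+j) * (Real.sqrt 3 - 1) := by ring
    have h2j : (2:ℝ) ^ (j - 1) * 2 = 2 ^ j := by
      rw [← pow_succ]; congr 1; omega
    rcases eq_or_ne l 0 with rfl | hl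
    · simp
    constructor
    · rw [hp1, hp2]
      field_simp
      rw [← h2j]
      ring_nf
      linear_combination (-(2:ℝ)^(j-1)) * h3
    · rw [hq1, hq2]
      field_simp
      rw [← h2j]
      ring_nf
      linear_combination (-(-1+Real.sqrt 3)^(j*2) * (2:ℝ)^(j-1)) * h3
  · obtain ⟨j, hj⟩ := ho
    subst hj
    have e1 : (2*j + 1) % 2 = 1 := by omega
    have e2 : (2*j + 1 + 2) % 2 = 1 := by omega
    have e3 : (2*j + 1 + 1) % 2 = 0 := by omega
    have d1 : (2*j + 1 - 1) / 2 = j := by omega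
    have d2 : (2*j + 1 + 2 - 1) / 2 = j + 1 := by omega
    have d3 : (2*j + 1 + 1) / 2 - 1 = j := by omega
    simp only [yvec, e1, e2, e3, d1, d2, d3, if_true, if_false]
    norm_num
    have hp1 : (Real.sqrt 3 + 1) ^ (2*j + 1 + 2) = (Real.sqrt 3 + 1) ^ (2*j+1) * (Real.sqrt 3 + 1)^2 := by ring
    have hp2 : (Real.sqrt 3 + 1) ^ (2*j + 1 + 1) = (Real.sqrt 3 + 1) ^ (2*j+1) * (Real.sqrt 3 + 1) := by ring
    have hq1 : (Real.sqrt 3 - 1) ^ (2*j + 1 + 2) = (Real.sqrt 3 - 1) ^ (2*j+1) * (Real.sqrt 3 - 1)^2 := by ring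
    have hq2 : (Real.sqrt 3 - 1) ^ (2*j + 1 + 1) = (Real.sqrt 3 - 1) ^ (2*j+1) * (Real.sqrt 3 - 1) := by ring
    have h2j : (2:ℝ) ^ (j + 1) = 2 ^ j * 2 := by rw [pow_succ]
    rcases eq_or_ne l 0 with rfl | hl
    · simp
    constructor
    · rw [hp1, hp2, h2j]
      field_simp
      ring_nf
      linear_combination h3
    · rw [hq1, hq2, h2j]
      field_simp
      ring_nf
      linear_combination (-(Real.sqrt 3 - 1) * (-1 + Real.sqrt 3) ^ (j*2)) * h3

lemma ybase (l : ℝ) (hl : l ≠ 0) (f₀ : Fin 2 → ℤ) :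
    ((Real.sqrt 3 - 1) / (2 * Real.sqrt 2) * (f₀ 0 : ℝ)
        + -(Real.sqrt 3 + 1) / (2 * Real.sqrt 2) * (f₀ 1 : ℝ)) / l =
      ((-3 * f₀ 0 + f₀ 1 : ℤ) : ℝ) * (yvec l 1).1 + ((-f₀ 0 : ℤ) : ℝ) * (yvec l 2).1 ∧
    ((-(Real.sqrt 3 + 1)) / (2 * Real.sqrt 2) * (f₀ 0 : ℝ)
        + (Real.sqrt 3 - 1) / (2 * Real.sqrt 2) * (f₀ 1 : ℝ)) / l =
      ((-3 * f₀ 0 + f₀ 1 : ℤ) : ℝ) * (yvec l 1).2 + ((-f₀ 0 : ℤ) : ℝ) * (yvec l 2).2 := by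
  have h3 : Real.sqrt 3 ^ 2 = 3 := Real.sq_sqrt (by norm_num)
  have h2 : Real.sqrt 2 ≠ 0 := ne_of_gt (Real.sqrt_pos.mpr (by norm_num))
  simp only [yvec]
  norm_num
  constructor
  · field_simp
    ring_nf
    linear_combination ((f₀ 0 : ℝ)) * h3
  · field_simp
    ring_nf
    linear_combination ((f₀ 0 : ℝ)) * h3

/-- Every scaled lattice point `G₂ f₀ / l` is an integer combination
`a y_{k-1} + b y_{k-2}` for each `k ≥ 3`; for `k = 3` one may take
`G₂ f₀ / l = (-3 f₀₁ + f₀₂) y₁ - f₀₁ y₂`. -/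
theorem lattice_point_integer_combination (l : ℝ) (hl : 0 < l) :
    (∀ (f₀ : Fin 2 → ℤ) (k : ℕ), 3 ≤ k → ∃ a b : ℤ,
      G₂.mulVec (fun i => (f₀ i : ℝ)) 0 / l =
        (a : ℝ) * (yvec l (k - 1)).1 + (b : ℝ) * (yvec l (k - 2)).1 ∧
      G₂.mulVec (fun i => (f₀ i : ℝ)) 1 / l =
        (a : ℝ) * (yvec l (k - 1)).2 + (b : ℝ) * (yvec l (k - 2)).2) ∧
    (∀ f₀ : Fin 2 → ℤ,
      G₂.mulVec (fun i => (f₀ i : ℝ)) 0 / l =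
        ((-3 * f₀ 0 + f₀ 1 : ℤ) : ℝ) * (yvec l 1).1 + ((-f₀ 0 : ℤ) : ℝ) * (yvec l 2).1 ∧
      G₂.mulVec (fun i => (f₀ i : ℝ)) 1 / l =
        ((-3 * f₀ 0 + f₀ 1 : ℤ) : ℝ) * (yvec l 1).2 + ((-f₀ 0 : ℤ) : ℝ) * (yvec l 2).2) := by
  have hl' : l ≠ 0 := ne_of_gt hl
  have hmv : ∀ f₀ : Fin 2 → ℤ,
      G₂.mulVec (fun i => (f₀ i : ℝ)) 0 =
        (Real.sqrt 3 - 1) / (2 * Real.sqrt 2) * (f₀ 0 : ℝ)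
          + -(Real.sqrt 3 + 1) / (2 * Real.sqrt 2) * (f₀ 1 : ℝ) ∧
      G₂.mulVec (fun i => (f₀ i : ℝ)) 1 =
        (-(Real.sqrt 3 + 1)) / (2 * Real.sqrt 2) * (f₀ 0 : ℝ)
          + (Real.sqrt 3 - 1) / (2 * Real.sqrt 2) * (f₀ 1 : ℝ) := by
    intro f₀
    constructor <;> simp [G₂, mulVec, dotProduct, Fin.sum_univ_two] <;> ring
  have hbase : ∀ f₀ : Fin 2 → ℤ,
      G₂.mulVec (fun i => (f₀ i : ℝ)) 0 / l =
        ((-3 * f₀ 0 + f₀ 1 : ℤ) : ℝ) * (yvec l 1).1 + ((-f₀ 0 : ℤ) : ℝ) * (yvec l 2).1 ∧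
      G₂.mulVec (fun i => (f₀ i : ℝ)) 1 / l =
        ((-3 * f₀ 0 + f₀ 1 : ℤ) : ℝ) * (yvec l 1).2 + ((-f₀ 0 : ℤ) : ℝ) * (yvec l 2).2 := by
    intro f₀
    rw [(hmv f₀).1, (hmv f₀).2]
    exact ybase l hl' f₀
  refine ⟨?_, hbase⟩
  intro f₀ k hk
  induction k, hk using Nat.le_induction with
  | base =>
    refine ⟨-f₀ 0, -3 * f₀ 0 + f₀ 1, ?_, ?_⟩
    · rw [(hbase f₀).1]
      norm_num
      ring
    · rw [(hbase f₀).2]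
      norm_num
      ring
  | succ k hk ih =>
    obtain ⟨a, b, H1, H2⟩ := ih
    set c : ℤ := if (k - 2) % 2 = 1 then 1 else 2 with hc
    have R := yrec l (k - 2) (by omega)
    have e1 : k - 2 + 2 = k + 1 - 1 := by omega
    have e2 : k - 2 + 1 = k + 1 - 2 := by omega
    have e3 : k - 1 = k + 1 - 2 := by omega
    rw [e1, e2] at R
    rw [e3] at H1 H2
    refine ⟨b, a + c * b, ?_, ?_⟩
    · rw [H1, R.1]; simp only [hc]; split <;> push_cast <;> ring
    · rw [H2, R.2]; simp only [hc]; split <;> push_cast <;> ring
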